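/- A homeomorphism f of a first countable, locally compact, paracompact Hausdorff space X has the topological shadowing property if and only if f^k has the topological shadowing property for every nonzero integer k. -/

import Mathlib

open Metric Filter Topology

def hpow {X : Type*} [TopologicalSpace X] (f : X ≃ₜ X) : ℕ → X ≃ₜ X
  | 0 => Homeomorph.refl X
  | n + 1 => (hpow f n).trans f

def hzpow {X : Type*} [TopologicalSpace X] (f : X ≃ₜ X) : ℤ → X ≃ₜ X
  | Int.ofNat n => hpow f n
  | Int.negSucc n => (hpow f (n + 1)).symm

/-- Topological shadowing property, phrased with neighborhoods of the diagonal. -/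
def TSPTop {X : Type*} [TopologicalSpace X] (f : X ≃ₜ X) : Prop :=
  ∀ E : Set (X × X), E ∈ nhdsSet (Set.diagonal X) →
    ∃ D ∈ nhdsSet (Set.diagonal X),
      ∀ x : ℤ → X, (∀ n : ℤ, (f (x n), x (n + 1)) ∈ D) →
        ∃ y : X, ∀ n : ℤ, (hzpow f n y, x n) ∈ E

section Aux
variable {X : Type*} [TopologicalSpace X]

lemma hpow_toEquiv (f : X ≃ₜ X) (n : ℕ) : (hpow f n).toEquiv = f.toEquiv ^ n := by
  induction n with
  | zero => rfl
  | succ n ih => ext x; simp [hpow, pow_succ', ← ih]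

lemma hzpow_toEquiv (f : X ≃ₜ X) (n : ℤ) : (hzpow f n).toEquiv = f.toEquiv ^ n := by
  cases n with
  | ofNat m => show (hpow f m).toEquiv = _; rw [hpow_toEquiv, Int.ofNat_eq_coe, zpow_natCast]
  | negSucc m =>
      show (hpow f (m+1)).symm.toEquiv = _
      rw [zpow_negSucc, ← hpow_toEquiv]
      rfl

lemma hzpow_apply (f : X ≃ₜ X) (n : ℤ) (x : X) : hzpow f n x = (f.toEquiv ^ n) x := by
  rw [← hzpow_toEquiv]; rfl

lemma step_apply (f : X ≃ₜ X) (r : ℤ) (z : X) :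
    f ((f.toEquiv ^ r) z) = (f.toEquiv ^ (r + 1)) z := by
  rw [add_comm, zpow_one_add, Equiv.Perm.mul_apply]; rfl

lemma tsp_symm (f : X ≃ₜ X) (hf : TSPTop f) : TSPTop f.symm := by
  intro E hE
  obtain ⟨D, hD, hshadow⟩ := hf E hE
  set h : (X × X) ≃ₜ (X × X) := (Homeomorph.prodComm X X).trans (f.prodCongr f) with hh
  refine ⟨h ⁻¹' D, ?_, ?_⟩
  · rw [mem_nhdsSet_iff_exists] at hD ⊢
    obtain ⟨U, hU, hdU, hUD⟩ := hD
    refine ⟨h ⁻¹' U, hU.preimage h.continuous, ?_, Set.preimage_mono hUD⟩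
    rintro ⟨a, b⟩ hab
    have : a = b := hab
    subst this
    exact hdU (show h (a, a) ∈ Set.diagonal X from rfl)
  · intro x hx
    have hpo : ∀ n : ℤ, (f ((fun n => x (-n)) n), (fun n => x (-n)) (n + 1)) ∈ D := by
      intro n
      have h2 := hx (-n - 1)
      have h3 : (-n - 1) + 1 = -n := by ring
      rw [h3] at h2
      have h4 : h (f.symm (x (-n - 1)), x (-n)) ∈ D := h2
      have h5 : (f (x (-n)), x (-n - 1)) ∈ D := by simpa [hh] using h4
      show (f (x (-n)), x (-(n + 1))) ∈ D
      rw [show -(n + 1) = -n - 1 by ring]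
      exact h5
    obtain ⟨y, hy⟩ := hshadow (fun n => x (-n)) hpo
    refine ⟨y, fun n => ?_⟩
    have h1 := hy (-n)
    simp only [neg_neg] at h1
    have heq : hzpow f.symm n y = hzpow f (-n) y := by
      rw [hzpow_apply, hzpow_apply]
      have : f.symm.toEquiv = (f.toEquiv)⁻¹ := rfl
      rw [this, inv_zpow, ← zpow_neg]
    rwa [heq]

lemma tsp_pos (f : X ≃ₜ X) (hf : TSPTop f) (k : ℤ) (hk : 0 < k) : TSPTop (hzpow f k) := by
  intro E hE
  obtain ⟨D, hD, hshadow⟩ := hf E hE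
  refine ⟨D, hD, ?_⟩
  intro x hx
  set e := f.toEquiv with he
  set x' : ℤ → X := fun i => (e ^ (i % k)) (x (i / k)) with hx'
  have hpo : ∀ i : ℤ, (f (x' i), x' (i + 1)) ∈ D := by
    intro i
    have hq := Int.mul_ediv_add_emod i k
    have hr0 : 0 ≤ i % k := Int.emod_nonneg i hk.ne'
    have hrk : i % k < k := Int.emod_lt_of_pos i hk
    by_cases hc : i % k + 1 < k
    · have hmod : (i + 1) % k = i % k + 1 := by
        conv_lhs => rw [← hq]
        rw [show k * (i / k) + i % k + 1 = (i % k + 1) + k * (i / k) by ring,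
          Int.add_mul_emod_self_left, Int.emod_eq_of_lt (by omega) hc]
      have hdiv : (i + 1) / k = i / k := by
        conv_lhs => rw [← hq]
        rw [show k * (i / k) + i % k + 1 = (i % k + 1) + k * (i / k) by ring,
          Int.add_mul_ediv_left _ _ hk.ne', Int.ediv_eq_zero_of_lt (by omega) hc, zero_add]
      have key : f (x' i) = x' (i + 1) := by
        simp only [hx', hmod, hdiv]
        exact step_apply f (i % k) (x (i / k))
      rw [key]
      exact subset_of_mem_nhdsSet hD rfl
    · have hrk1 : i % k + 1 = k := by omega
      have hi1 : i + 1 = k * (i / k + 1) := by rw [mul_add, mul_one]; omega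
      have hmod : (i + 1) % k = 0 := by rw [hi1]; exact Int.mul_emod_right k _
      have hdiv : (i + 1) / k = i / k + 1 := by
        rw [hi1]; exact Int.mul_ediv_cancel_left _ hk.ne'
      have key : f (x' i) = (e ^ k) (x (i / k)) := by
        simp only [hx']
        rw [step_apply f (i % k) (x (i / k)), hrk1]
      have hxq := hx (i / k)
      rw [hzpow_apply, ← he] at hxq
      simp only [hx', hmod, hdiv, key, zpow_zero, Equiv.Perm.coe_one, id_eq]
      rw [← key] at hxq
      exact hxq
  obtain ⟨y, hy⟩ := hshadow x' hpo
  refine ⟨y, fun n => ?_⟩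
  have h1 := hy (k * n)
  have e1 : (k * n) % k = 0 := Int.mul_emod_right k n
  have e2 : (k * n) / k = n := Int.mul_ediv_cancel_left n hk.ne'
  rw [hzpow_apply] at h1
  simp only [hx', e1, e2, zpow_zero, Equiv.Perm.coe_one, id_eq] at h1
  rw [hzpow_apply, hzpow_toEquiv, ← zpow_mul]
  exact h1

end Aux

/-- A homeomorphism `f` of a first countable, locally compact, paracompact Hausdorff space
has the topological shadowing property iff `f^k` has it for every nonzero integer `k`. -/
theorem TSPTop_iff_powers {X : Type*} [TopologicalSpace X] [T2Space X]
    [FirstCountableTopology X] [LocallyCompactSpace X] [ParacompactSpace X]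
    (f : X ≃ₜ X) :
    TSPTop f ↔ ∀ k : ℤ, k ≠ 0 → TSPTop (hzpow f k) := by
  constructor
  · intro hf k hk
    rcases lt_or_gt_of_ne hk with hneg | hpos
    · have h1 : TSPTop (hzpow f (-k)) := tsp_pos f hf (-k) (by omega)
      have h2 := tsp_symm _ h1
      have heq : hzpow f k = (hzpow f (-k)).symm := by
        ext z
        have : ((hzpow f (-k)).symm : X → X) z = ((hzpow f (-k)).toEquiv)⁻¹ z := rfl
        rw [hzpow_apply, this, hzpow_toEquiv, ← zpow_neg, neg_neg]
      rwa [heq]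
    · exact tsp_pos f hf k hpos
  · intro h
    have h1 := h 1 one_ne_zero
    have heq : hzpow f 1 = f := by
      ext z
      rw [hzpow_apply, zpow_one]
      rfl
    rwa [heq] at h1
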